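/- arXiv:1009.4501 — 2 statements merged into one kernel-verified Lean document; each statement's English description precedes it below -/
import Mathlib

section
/- Let a ≥ 0 and b > 0, and define F(y) = (a + b|y|) y/|y| on {y ∈ ℝ³ : y ≠ 0}. Then F is differentiable with Jacobian DF(y) = b ŷŷᵀ + ((a + b|y|)/|y|)(I − ŷŷᵀ), where ŷ = y/|y| and ŷŷᵀ is the orthogonal projection onto the line spanned by ŷ; det DF(y) = b(a + b|y|)²/|y|²; and for x = F(y), writing x̂ = x/|x|, the push-forward matrix satisfies DF(y) DF(y)ᵀ / det DF(y) = ((|x| − a)²/(b|x|²)) x̂x̂ᵀ + (1/b)(I − x̂x̂ᵀ). -/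
/-- The Euclidean norm on `Fin 3 → ℝ`. -/
noncomputable def enorm3 (x : Fin 3 → ℝ) : ℝ := Real.sqrt (x 0 ^ 2 + x 1 ^ 2 + x 2 ^ 2)

noncomputable def lin3 (y : Fin 3 → ℝ) : (Fin 3 → ℝ) →L[ℝ] ℝ :=
  y 0 • ContinuousLinearMap.proj 0 + y 1 • ContinuousLinearMap.proj 1 +
    y 2 • ContinuousLinearMap.proj 2

lemma lin3_apply (y v : Fin 3 → ℝ) : lin3 y v = y 0 * v 0 + y 1 * v 1 + y 2 * v 2 := by
  simp [lin3, smul_eq_mul]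

lemma lin3_single (y : Fin 3 → ℝ) (j : Fin 3) : lin3 y (Pi.single j 1) = y j := by
  fin_cases j <;> simp [lin3_apply]

lemma sq_sum_pos {y : Fin 3 → ℝ} (hy : y ≠ 0) : 0 < y 0 ^ 2 + y 1 ^ 2 + y 2 ^ 2 := by
  obtain ⟨i, hi⟩ := Function.ne_iff.mp hy
  fin_cases i <;> simp at hi <;>
    nlinarith [sq_nonneg (y 0), sq_nonneg (y 1), sq_nonneg (y 2), mul_self_pos.mpr hi]

lemma enorm3_pos {y : Fin 3 → ℝ} (hy : y ≠ 0) : 0 < enorm3 y :=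
  Real.sqrt_pos.mpr (sq_sum_pos hy)

lemma enorm3_sq {y : Fin 3 → ℝ} : (enorm3 y) ^ 2 = y 0 ^ 2 + y 1 ^ 2 + y 2 ^ 2 := by
  have h := (sq_sum_pos (y := y))
  by_cases hy : y = 0
  · subst hy; simp [enorm3]
  · exact Real.sq_sqrt (le_of_lt (h hy))

lemma hasFDerivAt_enorm3 {y : Fin 3 → ℝ} (hy : y ≠ 0) :
    HasFDerivAt enorm3 ((enorm3 y)⁻¹ • lin3 y) y := by
  have hq : HasFDerivAt (fun z : Fin 3 → ℝ => z 0 ^ 2 + z 1 ^ 2 + z 2 ^ 2)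
      ((2 * y 0) • (ContinuousLinearMap.proj 0 : (Fin 3 → ℝ) →L[ℝ] ℝ) +
        (2 * y 1) • (ContinuousLinearMap.proj 1 : (Fin 3 → ℝ) →L[ℝ] ℝ) +
        (2 * y 2) • (ContinuousLinearMap.proj 2 : (Fin 3 → ℝ) →L[ℝ] ℝ)) y := by
    have h0 : HasFDerivAt (fun z : Fin 3 → ℝ => z 0)
        (ContinuousLinearMap.proj 0 : (Fin 3 → ℝ) →L[ℝ] ℝ) y :=
      (ContinuousLinearMap.proj (0 : Fin 3) : (Fin 3 → ℝ) →L[ℝ] ℝ).hasFDerivAt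
    have h1 : HasFDerivAt (fun z : Fin 3 → ℝ => z 1)
        (ContinuousLinearMap.proj 1 : (Fin 3 → ℝ) →L[ℝ] ℝ) y :=
      (ContinuousLinearMap.proj (1 : Fin 3) : (Fin 3 → ℝ) →L[ℝ] ℝ).hasFDerivAt
    have h2 : HasFDerivAt (fun z : Fin 3 → ℝ => z 2)
        (ContinuousLinearMap.proj 2 : (Fin 3 → ℝ) →L[ℝ] ℝ) y :=
      (ContinuousLinearMap.proj (2 : Fin 3) : (Fin 3 → ℝ) →L[ℝ] ℝ).hasFDerivAt
    have := ((h0.mul h0).add (h1.mul h1)).add (h2.mul h2)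
    simp_rw [pow_two]
    refine this.congr_fderiv ?_
    ext v
    simp [smul_eq_mul]
    ring
  have hne : y 0 ^ 2 + y 1 ^ 2 + y 2 ^ 2 ≠ 0 := ne_of_gt (sq_sum_pos hy)
  have := hq.sqrt hne
  refine this.congr_fderiv ?_
  ext v
  have hn : enorm3 y = Real.sqrt (y 0 ^ 2 + y 1 ^ 2 + y 2 ^ 2) := rfl
  simp [lin3, smul_eq_mul, ← hn]
  have : (enorm3 y) ≠ 0 := ne_of_gt (enorm3_pos hy)
  field_simp

/-- The Jacobian matrix of a map `F : ℝ³ → ℝ³` at a point `y`. -/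
noncomputable def jac (F : (Fin 3 → ℝ) → (Fin 3 → ℝ)) (y : Fin 3 → ℝ) :
    Matrix (Fin 3) (Fin 3) ℝ :=
  Matrix.of fun i j => fderiv ℝ F y (Pi.single j 1) i

/-- For `F(y) = (a + b|y|) y/|y|` on `ℝ³ \ {0}` with `a ≥ 0`, `b > 0`:
`F` is differentiable with Jacobian `b ŷŷᵀ + ((a+b|y|)/|y|)(I − ŷŷᵀ)`,
`det DF(y) = b(a+b|y|)²/|y|²`, and for `x = F(y)` the push-forward matrix satisfies
`DF DFᵀ/det DF = ((|x|−a)²/(b|x|²)) x̂x̂ᵀ + (1/b)(I − x̂x̂ᵀ)`. -/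
theorem radial_map_jacobian
    (a b : ℝ) (ha : 0 ≤ a) (hb : 0 < b)
    (F : (Fin 3 → ℝ) → (Fin 3 → ℝ))
    (hF : ∀ y : Fin 3 → ℝ, y ≠ 0 → F y = ((a + b * enorm3 y) / enorm3 y) • y) :
    ∀ y : Fin 3 → ℝ, y ≠ 0 →
      DifferentiableAt ℝ F y ∧
      jac F y = b • Matrix.vecMulVec ((enorm3 y)⁻¹ • y) ((enorm3 y)⁻¹ • y) +
        ((a + b * enorm3 y) / enorm3 y) •
          (1 - Matrix.vecMulVec ((enorm3 y)⁻¹ • y) ((enorm3 y)⁻¹ • y)) ∧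
      (jac F y).det = b * (a + b * enorm3 y) ^ 2 / (enorm3 y) ^ 2 ∧
      ((jac F y).det)⁻¹ • (jac F y * (jac F y).transpose) =
        ((enorm3 (F y) - a) ^ 2 / (b * (enorm3 (F y)) ^ 2)) •
          Matrix.vecMulVec ((enorm3 (F y))⁻¹ • F y) ((enorm3 (F y))⁻¹ • F y) +
        b⁻¹ • (1 - Matrix.vecMulVec ((enorm3 (F y))⁻¹ • F y) ((enorm3 (F y))⁻¹ • F y)) := by
  intro y hy
  have hn0 : 0 < enorm3 y := enorm3_pos hy
  set n := enorm3 y with hn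
  have hnne : n ≠ 0 := ne_of_gt hn0
  have hn2 : n ^ 2 = y 0 ^ 2 + y 1 ^ 2 + y 2 ^ 2 := enorm3_sq
  -- derivative of the scalar coefficient
  have hc : HasFDerivAt (fun z => a * (enorm3 z)⁻¹ + b)
      ((-(a * (n ^ 3)⁻¹)) • lin3 y) y := by
    have hinv : HasFDerivAt (fun z => (enorm3 z)⁻¹)
        ((-(n ^ 2)⁻¹) • ((enorm3 y)⁻¹ • lin3 y)) y :=
      (hasDerivAt_inv hnne).comp_hasFDerivAt y (hasFDerivAt_enorm3 hy)
    have h2 := (hinv.const_mul a).add_const b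
    have heq : (-(a * (n ^ 3)⁻¹)) • lin3 y
        = a • ((-(n ^ 2)⁻¹) • ((enorm3 y)⁻¹ • lin3 y)) := by
      rw [smul_smul, smul_smul, ← hn,
        show -(a * (n ^ 3)⁻¹) = a * -(n ^ 2)⁻¹ * n⁻¹ by rw [pow_succ, mul_inv]; ring]
    rw [heq]
    exact h2
  have hG : HasFDerivAt (fun z => (a * (enorm3 z)⁻¹ + b) • z)
      ((a * n⁻¹ + b) • (ContinuousLinearMap.id ℝ (Fin 3 → ℝ)) +
        ((-(a * (n ^ 3)⁻¹)) • lin3 y).smulRight y) y :=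
    hc.smul (hasFDerivAt_id y)
  have hEv : F =ᶠ[nhds y] fun z => (a * (enorm3 z)⁻¹ + b) • z := by
    filter_upwards [isOpen_compl_singleton.mem_nhds hy] with z hz
    have hz' : (z : Fin 3 → ℝ) ≠ 0 := hz
    have hzn : enorm3 z ≠ 0 := ne_of_gt (enorm3_pos hz')
    rw [hF z hz']
    congr 1
    field_simp
  have hFD : HasFDerivAt F
      ((a * n⁻¹ + b) • (ContinuousLinearMap.id ℝ (Fin 3 → ℝ)) +
        ((-(a * (n ^ 3)⁻¹)) • lin3 y).smulRight y) y :=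
    hG.congr_of_eventuallyEq hEv
  have hjac : jac F y = (a * n⁻¹ + b) • (1 : Matrix (Fin 3) (Fin 3) ℝ) -
      (a * (n ^ 3)⁻¹) • Matrix.vecMulVec y y := by
    ext i j
    simp only [jac, Matrix.of_apply]
    rw [hFD.fderiv]
    simp [ContinuousLinearMap.add_apply, ContinuousLinearMap.smul_apply,
      ContinuousLinearMap.smulRight_apply, lin3_single, Matrix.sub_apply,
      Matrix.smul_apply, Matrix.one_apply, Matrix.vecMulVec_apply, smul_eq_mul,
      Pi.single_apply]
    by_cases hij : i = j <;> simp [hij] <;> ring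
  set W := Matrix.vecMulVec y y with hW
  have hWW : W * W = (n ^ 2) • W := by
    ext i j
    simp [hW, Matrix.mul_apply, Fin.sum_univ_three, Matrix.vecMulVec_apply,
      Matrix.smul_apply, smul_eq_mul]
    linear_combination (-(y i * y j)) * hn2
  have hWT : W.transpose = W := by
    ext i j; simp [hW, Matrix.vecMulVec_apply]; ring
  have hV : Matrix.vecMulVec (n⁻¹ • y) (n⁻¹ • y) = (n⁻¹ * n⁻¹) • W := by
    ext i j
    simp [hW, Matrix.vecMulVec_apply, Matrix.smul_apply, smul_eq_mul]
    ring
  have span2 : ∀ (p q r s : ℝ) (A B : Matrix (Fin 3) (Fin 3) ℝ),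
      p = r → q = s → p • A + q • B = r • A + s • B := by
    rintro p q r s A B rfl rfl; rfl
  have hdet0 : ∀ C D : ℝ, ((C • (1 : Matrix (Fin 3) (Fin 3) ℝ) - D • W).det)
      = C ^ 3 - C ^ 2 * D * (y 0 ^ 2 + y 1 ^ 2 + y 2 ^ 2) := by
    intro C D
    rw [Matrix.det_fin_three]
    norm_num [Matrix.sub_apply, Matrix.smul_apply, Matrix.one_apply, Fin.ext_iff, hW,
      Matrix.vecMulVec_apply, smul_eq_mul]
    ring
  have hdet : (jac F y).det = b * (a + b * n) ^ 2 / n ^ 2 := by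
    rw [hjac, hdet0, ← hn2]
    field_simp
    ring
  have hform : jac F y = (a * n⁻¹ + b) • (1 : Matrix (Fin 3) (Fin 3) ℝ) +
      (-(a * (n ^ 3)⁻¹)) • W := by
    rw [hjac, neg_smul, sub_eq_add_neg]
  refine ⟨hFD.differentiableAt, ?_, hdet, ?_⟩
  · rw [hform, hV]
    match_scalars <;> field_simp <;> ring
  · have habn : 0 < a + b * n := by nlinarith
    have hFy : F y = ((a + b * n) / n) • y := hF y hy
    have hnF : enorm3 (F y) = a + b * n := by
      rw [hFy]
      show Real.sqrt _ = _
      simp only [Pi.smul_apply, smul_eq_mul]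
      rw [show ((a + b * n) / n * y 0) ^ 2 + ((a + b * n) / n * y 1) ^ 2 +
          ((a + b * n) / n * y 2) ^ 2 = ((a + b * n) / n) ^ 2 *
          (y 0 ^ 2 + y 1 ^ 2 + y 2 ^ 2) by ring, ← hn2,
        Real.sqrt_mul (by positivity), Real.sqrt_sq (by positivity),
        Real.sqrt_sq (le_of_lt hn0)]
      field_simp
    have hunit : (enorm3 (F y))⁻¹ • F y = n⁻¹ • y := by
      rw [hnF, hFy, smul_smul]
      congr 1
      field_simp
    rw [hdet, hunit, hnF, hform, hV]
    have htr : ((a * n⁻¹ + b) • (1 : Matrix (Fin 3) (Fin 3) ℝ) +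
        (-(a * (n ^ 3)⁻¹)) • W).transpose = (a * n⁻¹ + b) • 1 + (-(a * (n ^ 3)⁻¹)) • W := by
      rw [Matrix.transpose_add, Matrix.transpose_smul, Matrix.transpose_smul,
        Matrix.transpose_one, hWT]
    rw [htr]
    have hmul : ((a * n⁻¹ + b) • (1 : Matrix (Fin 3) (Fin 3) ℝ) + (-(a * (n ^ 3)⁻¹)) • W) *
        ((a * n⁻¹ + b) • 1 + (-(a * (n ^ 3)⁻¹)) • W) =
        ((a * n⁻¹ + b) * (a * n⁻¹ + b)) • (1 : Matrix (Fin 3) (Fin 3) ℝ) +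
          ((a * n⁻¹ + b) * (-(a * (n ^ 3)⁻¹)) + (-(a * (n ^ 3)⁻¹)) * (a * n⁻¹ + b) +
            (-(a * (n ^ 3)⁻¹)) * (-(a * (n ^ 3)⁻¹)) * n ^ 2) • W := by
      simp only [add_mul, mul_add, Matrix.smul_mul, Matrix.mul_smul, Matrix.one_mul,
        Matrix.mul_one, hWW, smul_smul]
      match_scalars <;> ring
    rw [hmul]
    match_scalars <;> field_simp <;> ring
end

section
/- Fix ω > 0, ε₀ > 0, μ₀ > 0, an integer n ≥ 1, and set k = (ε₀μ₀)^{1/2}; assume j_n(kω) ≠ 0. For ρ ∈ (0,1) define t₁′(ρ) = [h_n(kω)𝒥_n(kω) − 𝓗_n(kω)j_n(kω)] / [μ₀^{−1/2} ρ h_n(ωρ) 𝒥_n(kω) − ε₀^{−1/2} k 𝓗_n(ωρ) j_n(kω)], t₂′(ρ) = [ε₀^{−1/2} k h_n(kω) 𝓗_n(ωρ) − μ₀^{−1/2} ρ 𝓗_n(kω) h_n(ωρ)] / [μ₀^{−1/2} ρ h_n(ωρ) 𝒥_n(kω) − ε₀^{−1/2} k 𝓗_n(ωρ) j_n(kω)],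 t₃′(ρ) = [𝒥_n(kω)h_n(kω) − 𝓗_n(kω)j_n(kω)] / [ε₀^{−1/2} ρ h_n(ωρ) 𝒥_n(kω) − μ₀^{−1/2} k 𝓗_n(ωρ) j_n(kω)], and t₄′(ρ) = [μ₀^{−1/2} k h_n(kω) 𝓗_n(ωρ) − ε₀^{−1/2} ρ 𝓗_n(kω) h_n(ωρ)] / [ε₀^{−1/2} ρ h_n(ωρ) 𝒥_n(kω) − μ₀^{−1/2} k 𝓗_n(ωρ) j_n(kω)]. Then as ρ → 0⁺: t₁′(ρ) = O(ρ^{n+1}), t₃′(ρ) = O(ρ^{n+1}), and t₂′(ρ) and t₄′(ρ) are bounded, with lim_{ρ→0⁺} t₂′(ρ) = lim_{ρ→0⁺} t₄′(ρ) = −h_n(kω)/j_n(kω). -/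
/-- The operator `f ↦ (z ↦ f′(z)/z)` used in the Rayleigh formulas. -/
noncomputable def sphDOp (f : ℂ → ℂ) : ℂ → ℂ := fun z => deriv f z / z

/-- Spherical Bessel function of the first kind:
`j_n(z) = (−z)^n (z⁻¹ d/dz)^n (sin z / z)`. -/
noncomputable def sbj (n : ℕ) (z : ℂ) : ℂ :=
  (-z) ^ n * sphDOp^[n] (fun w => Complex.sin w / w) z

/-- Spherical Bessel function of the second kind:
`y_n(z) = −(−z)^n (z⁻¹ d/dz)^n (cos z / z)`. -/
noncomputable def sby (n : ℕ) (z : ℂ) : ℂ :=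
  -((-z) ^ n * sphDOp^[n] (fun w => Complex.cos w / w) z)

/-- Spherical Hankel function of the first kind `h_n = j_n + i y_n`. -/
noncomputable def sbh (n : ℕ) (z : ℂ) : ℂ := sbj n z + Complex.I * sby n z

/-- `𝒥_n(z) = j_n(z) + z j_n′(z)`. -/
noncomputable def sbJ (n : ℕ) (z : ℂ) : ℂ := sbj n z + z * deriv (sbj n) z

/-- `𝓗_n(z) = h_n(z) + z h_n′(z)`. -/
noncomputable def sbH (n : ℕ) (z : ℂ) : ℂ := sbh n z + z * deriv (sbh n) z

/-- `x^{−1/2}` for a positive real `x`, as a complex number. -/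
noncomputable def invSqrtC (x : ℝ) : ℂ := ((Real.sqrt x)⁻¹ : ℝ)

/-- `g(ρ) = O(ρ^s)` as `ρ → 0⁺`. -/
def IsBigORho (g : ℝ → ℂ) (s : ℝ) : Prop :=
  ∃ C : ℝ, 0 < C ∧ ∃ δ : ℝ, 0 < δ ∧
    ∀ ρ : ℝ, 0 < ρ → ρ < δ → ‖g ρ‖ ≤ C * ρ ^ s

/-- The source transmission ratio `t₁′(ρ)`. -/
noncomputable def t1' (n : ℕ) (ω ε₀ μ₀ k ρ : ℝ) : ℂ :=
  (sbh n ((k * ω : ℝ) : ℂ) * sbJ n ((k * ω : ℝ) : ℂ)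
      - sbH n ((k * ω : ℝ) : ℂ) * sbj n ((k * ω : ℝ) : ℂ)) /
  (invSqrtC μ₀ * (ρ : ℂ) * sbh n ((ω * ρ : ℝ) : ℂ) * sbJ n ((k * ω : ℝ) : ℂ)
      - invSqrtC ε₀ * (k : ℂ) * sbH n ((ω * ρ : ℝ) : ℂ) * sbj n ((k * ω : ℝ) : ℂ))

/-- The source transmission ratio `t₂′(ρ)`. -/
noncomputable def t2' (n : ℕ) (ω ε₀ μ₀ k ρ : ℝ) : ℂ :=
  (invSqrtC ε₀ * (k : ℂ) * sbh n ((k * ω : ℝ) : ℂ) * sbH n ((ω * ρ : ℝ) : ℂ)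
      - invSqrtC μ₀ * (ρ : ℂ) * sbH n ((k * ω : ℝ) : ℂ) * sbh n ((ω * ρ : ℝ) : ℂ)) /
  (invSqrtC μ₀ * (ρ : ℂ) * sbh n ((ω * ρ : ℝ) : ℂ) * sbJ n ((k * ω : ℝ) : ℂ)
      - invSqrtC ε₀ * (k : ℂ) * sbH n ((ω * ρ : ℝ) : ℂ) * sbj n ((k * ω : ℝ) : ℂ))

/-- The source transmission ratio `t₃′(ρ)`. -/
noncomputable def t3' (n : ℕ) (ω ε₀ μ₀ k ρ : ℝ) : ℂ :=
  (sbJ n ((k * ω : ℝ) : ℂ) * sbh n ((k * ω : ℝ) : ℂ)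
      - sbH n ((k * ω : ℝ) : ℂ) * sbj n ((k * ω : ℝ) : ℂ)) /
  (invSqrtC ε₀ * (ρ : ℂ) * sbh n ((ω * ρ : ℝ) : ℂ) * sbJ n ((k * ω : ℝ) : ℂ)
      - invSqrtC μ₀ * (k : ℂ) * sbH n ((ω * ρ : ℝ) : ℂ) * sbj n ((k * ω : ℝ) : ℂ))

/-- The source transmission ratio `t₄′(ρ)`. -/
noncomputable def t4' (n : ℕ) (ω ε₀ μ₀ k ρ : ℝ) : ℂ :=
  (invSqrtC μ₀ * (k : ℂ) * sbh n ((k * ω : ℝ) : ℂ) * sbH n ((ω * ρ : ℝ) : ℂ)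
      - invSqrtC ε₀ * (ρ : ℂ) * sbH n ((k * ω : ℝ) : ℂ) * sbh n ((ω * ρ : ℝ) : ℂ)) /
  (invSqrtC ε₀ * (ρ : ℂ) * sbh n ((ω * ρ : ℝ) : ℂ) * sbJ n ((k * ω : ℝ) : ℂ)
      - invSqrtC μ₀ * (k : ℂ) * sbj n ((k * ω : ℝ) : ℂ) * sbH n ((ω * ρ : ℝ) : ℂ))

section AuxSpherical
open Polynomial Complex

/-- Step of the polynomial pair recurrence. -/
noncomputable def prStep (m : ℕ) (pr : ℂ[X] × ℂ[X]) : ℂ[X] × ℂ[X] :=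
  (X * pr.1.derivative - X * pr.2 - C ((2 * m : ℂ) + 1) * pr.1,
   X * pr.1 + X * pr.2.derivative - C ((2 * m : ℂ) + 1) * pr.2)

noncomputable def prSeq (init : ℂ[X] × ℂ[X]) : ℕ → ℂ[X] × ℂ[X]
  | 0 => init
  | n + 1 => prStep n (prSeq init n)

lemma hasDerivAt_trig (P R : ℂ[X]) (m : ℕ) (z : ℂ) (hz : z ≠ 0) :
    HasDerivAt (fun w => (Complex.sin w * P.eval w + Complex.cos w * R.eval w) / w ^ (m + 1))
      ((Complex.sin z * (X * P.derivative - X * R - C ((m : ℂ) + 1) * P).eval z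
        + Complex.cos z * (X * P + X * R.derivative - C ((m : ℂ) + 1) * R).eval z) / z ^ (m + 2)) z := by
  have hnum : HasDerivAt (fun w => Complex.sin w * P.eval w + Complex.cos w * R.eval w)
      (Complex.cos z * P.eval z + Complex.sin z * P.derivative.eval z
        + (-Complex.sin z * R.eval z + Complex.cos z * R.derivative.eval z)) z :=
    ((Complex.hasDerivAt_sin z).mul (P.hasDerivAt z)).add
      ((Complex.hasDerivAt_cos z).mul (R.hasDerivAt z))
  have hden : HasDerivAt (fun w : ℂ => w ^ (m + 1)) (((m : ℂ) + 1) * z ^ m) z := by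
    simpa using hasDerivAt_pow (m + 1) z
  have h := hnum.div hden (pow_ne_zero _ hz)
  refine HasDerivAt.congr_deriv h ?_
  have hzm : z ^ m ≠ 0 := pow_ne_zero _ hz
  simp only [eval_sub, eval_add, eval_mul, eval_X, eval_C]
  rw [div_eq_div_iff (pow_ne_zero _ (pow_ne_zero _ hz)) (pow_ne_zero _ hz)]
  ring

lemma iter_formula (init : ℂ[X] × ℂ[X]) (n : ℕ) (z : ℂ) (hz : z ≠ 0) :
    sphDOp^[n] (fun w => (Complex.sin w * init.1.eval w + Complex.cos w * init.2.eval w) / w ^ 1) z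
      = (Complex.sin z * (prSeq init n).1.eval z + Complex.cos z * (prSeq init n).2.eval z)
          / z ^ (2 * n + 1) := by
  induction n generalizing z hz with
  | zero => simp [prSeq]
  | succ n ih =>
    rw [Function.iterate_succ_apply']
    show deriv (sphDOp^[n] (fun w => (Complex.sin w * init.1.eval w
        + Complex.cos w * init.2.eval w) / w ^ 1)) z / z = _
    have hev : sphDOp^[n] (fun w => (Complex.sin w * init.1.eval w
        + Complex.cos w * init.2.eval w) / w ^ 1)
        =ᶠ[nhds z] fun w => (Complex.sin w * (prSeq init n).1.eval w
          + Complex.cos w * (prSeq init n).2.eval w) / w ^ (2 * n + 1) := by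
      filter_upwards [IsOpen.mem_nhds isOpen_ne hz] with w hw
      exact ih w hw
    rw [hev.deriv_eq]
    have hd := hasDerivAt_trig (prSeq init n).1 (prSeq init n).2 (2 * n) z hz
    rw [hd.deriv]
    show _ / z = (Complex.sin z * (prStep n (prSeq init n)).1.eval z
      + Complex.cos z * (prStep n (prSeq init n)).2.eval z) / z ^ (2 * (n + 1) + 1)
    simp only [prStep]
    have h1 : z ^ (2 * n + 2) ≠ 0 := pow_ne_zero _ hz
    have h2 : z ^ (2 * (n + 1) + 1) ≠ 0 := pow_ne_zero _ hz
    push_cast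
    rw [div_div, div_eq_div_iff (by exact mul_ne_zero h1 hz) h2]
    ring

/-- combined polynomials for `h_n` -/
noncomputable def Us (n : ℕ) : ℂ[X] := (prSeq (1, 0) n).1 - C Complex.I * (prSeq (0, 1) n).1
noncomputable def Vs (n : ℕ) : ℂ[X] := (prSeq (1, 0) n).2 - C Complex.I * (prSeq (0, 1) n).2
noncomputable def Ap (n : ℕ) : ℂ[X] := X * (Us n).derivative - X * Vs n - C (n : ℂ) * Us n
noncomputable def Bp (n : ℕ) : ℂ[X] := X * Us n + X * (Vs n).derivative - C (n : ℂ) * Vs n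

lemma iter_sin (n : ℕ) (z : ℂ) (hz : z ≠ 0) :
    sphDOp^[n] (fun w => Complex.sin w / w) z
      = (Complex.sin z * (prSeq (1, 0) n).1.eval z
          + Complex.cos z * (prSeq (1, 0) n).2.eval z) / z ^ (2 * n + 1) := by
  have h := iter_formula (1, 0) n z hz
  have hf : (fun w => (Complex.sin w * (1 : ℂ[X]).eval w
      + Complex.cos w * (0 : ℂ[X]).eval w) / w ^ 1) = fun w => Complex.sin w / w := by
    funext w; simp
  rwa [hf] at h

lemma iter_cos (n : ℕ) (z : ℂ) (hz : z ≠ 0) :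
    sphDOp^[n] (fun w => Complex.cos w / w) z
      = (Complex.sin z * (prSeq (0, 1) n).1.eval z
          + Complex.cos z * (prSeq (0, 1) n).2.eval z) / z ^ (2 * n + 1) := by
  have h := iter_formula (0, 1) n z hz
  have hf : (fun w => (Complex.sin w * (0 : ℂ[X]).eval w
      + Complex.cos w * (1 : ℂ[X]).eval w) / w ^ 1) = fun w => Complex.cos w / w := by
    funext w; simp
  rwa [hf] at h

lemma sbh_eq (n : ℕ) (z : ℂ) (hz : z ≠ 0) :
    sbh n z = (-1 : ℂ) ^ n
      * ((Complex.sin z * (Us n).eval z + Complex.cos z * (Vs n).eval z) / z ^ (n + 1)) := by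
  unfold sbh sbj sby
  rw [iter_sin n z hz, iter_cos n z hz]
  simp only [Us, Vs, eval_sub, eval_mul, eval_C]
  have h1 : z ^ (2 * n + 1) ≠ 0 := pow_ne_zero _ hz
  have h2 : z ^ (n + 1) ≠ 0 := pow_ne_zero _ hz
  rw [neg_pow]
  field_simp
  ring

lemma sbH_eq (n : ℕ) (z : ℂ) (hz : z ≠ 0) :
    sbH n z = (-1 : ℂ) ^ n
      * ((Complex.sin z * (Ap n).eval z + Complex.cos z * (Bp n).eval z) / z ^ (n + 1)) := by
  have hev : sbh n =ᶠ[nhds z] fun w => (-1 : ℂ) ^ n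
      * ((Complex.sin w * (Us n).eval w + Complex.cos w * (Vs n).eval w) / w ^ (n + 1)) := by
    filter_upwards [IsOpen.mem_nhds isOpen_ne hz] with w hw
    exact sbh_eq n w hw
  have hd := ((hasDerivAt_trig (Us n) (Vs n) n z hz).const_mul ((-1 : ℂ) ^ n))
  unfold sbH
  rw [sbh_eq n z hz, hev.deriv_eq, hd.deriv]
  simp only [Ap, Bp, eval_sub, eval_add, eval_mul, eval_C, eval_X]
  have h1 : z ^ (n + 1) ≠ 0 := pow_ne_zero _ hz
  have h2 : z ^ (n + 2) ≠ 0 := pow_ne_zero _ hz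
  field_simp
  ring

lemma prSeq10_snd_eval0 (n : ℕ) : ((prSeq (1, 0) n).2).eval 0 = 0 := by
  induction n with
  | zero => simp [prSeq]
  | succ n ih => simp [prSeq, prStep, ih]

lemma prSeq01_fst_eval0 (n : ℕ) : ((prSeq (0, 1) n).1).eval 0 = 0 := by
  induction n with
  | zero => simp [prSeq]
  | succ n ih => simp [prSeq, prStep, ih]

lemma prSeq01_snd_eval0_ne (n : ℕ) : ((prSeq (0, 1) n).2).eval 0 ≠ 0 := by
  induction n with
  | zero => simp [prSeq]
  | succ n ih =>
    have hc : (2 * (n : ℂ) + 1) ≠ 0 := by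
      have : ((2 * n + 1 : ℕ) : ℂ) ≠ 0 := Nat.cast_ne_zero.mpr (by omega)
      push_cast at this
      exact this
    simp only [prSeq, prStep, eval_sub, eval_add, eval_mul, eval_C, eval_X, zero_mul,
      zero_add, zero_sub, neg_ne_zero]
    exact mul_ne_zero hc ih

lemma Vs_eval0_ne (n : ℕ) : (Vs n).eval 0 ≠ 0 := by
  simp only [Vs, eval_sub, eval_mul, eval_C, prSeq10_snd_eval0, zero_sub, neg_ne_zero]
  exact mul_ne_zero Complex.I_ne_zero (prSeq01_snd_eval0_ne n)

lemma Bp_eval0 (n : ℕ) : (Bp n).eval 0 = -(n : ℂ) * (Vs n).eval 0 := by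
  simp [Bp]

lemma Bp_eval0_ne (n : ℕ) (hn : 1 ≤ n) : (Bp n).eval 0 ≠ 0 := by
  rw [Bp_eval0]
  exact mul_ne_zero (neg_ne_zero.mpr (Nat.cast_ne_zero.mpr (by omega))) (Vs_eval0_ne n)

noncomputable def Gf (n : ℕ) (ω ρ : ℝ) : ℂ :=
  Complex.sin ((ω * ρ : ℝ) : ℂ) * (Us n).eval ((ω * ρ : ℝ) : ℂ)
    + Complex.cos ((ω * ρ : ℝ) : ℂ) * (Vs n).eval ((ω * ρ : ℝ) : ℂ)

noncomputable def Kf (n : ℕ) (ω ρ : ℝ) : ℂ :=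
  Complex.sin ((ω * ρ : ℝ) : ℂ) * (Ap n).eval ((ω * ρ : ℝ) : ℂ)
    + Complex.cos ((ω * ρ : ℝ) : ℂ) * (Bp n).eval ((ω * ρ : ℝ) : ℂ)

lemma Gf_cont (n : ℕ) (ω : ℝ) : Continuous (Gf n ω) := by
  have hco : Continuous (fun ρ : ℝ => ((ω * ρ : ℝ) : ℂ)) :=
    Complex.continuous_ofReal.comp (continuous_const.mul continuous_id)
  exact ((Complex.continuous_sin.comp hco).mul ((Us n).continuous.comp hco)).add
    ((Complex.continuous_cos.comp hco).mul ((Vs n).continuous.comp hco))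

lemma Kf_cont (n : ℕ) (ω : ℝ) : Continuous (Kf n ω) := by
  have hco : Continuous (fun ρ : ℝ => ((ω * ρ : ℝ) : ℂ)) :=
    Complex.continuous_ofReal.comp (continuous_const.mul continuous_id)
  exact ((Complex.continuous_sin.comp hco).mul ((Ap n).continuous.comp hco)).add
    ((Complex.continuous_cos.comp hco).mul ((Bp n).continuous.comp hco))

lemma Kf_zero (n : ℕ) (ω : ℝ) : Kf n ω 0 = (Bp n).eval 0 := by
  simp [Kf]

lemma Gf_zero (n : ℕ) (ω : ℝ) : Gf n ω 0 = (Vs n).eval 0 := by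
  simp [Gf]

lemma key_asymp (n : ℕ) (hn : 1 ≤ n) (ω : ℝ) (hω : 0 < ω) (A a b j J h H : ℂ)
    (hb : b ≠ 0) (hj : j ≠ 0) :
    IsBigORho (fun ρ : ℝ => A /
        (a * (ρ : ℂ) * sbh n ((ω * ρ : ℝ) : ℂ) * J
          - b * sbH n ((ω * ρ : ℝ) : ℂ) * j)) ((n : ℝ) + 1)
    ∧ Filter.Tendsto (fun ρ : ℝ =>
        (b * h * sbH n ((ω * ρ : ℝ) : ℂ) - a * (ρ : ℂ) * H * sbh n ((ω * ρ : ℝ) : ℂ)) /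
        (a * (ρ : ℂ) * sbh n ((ω * ρ : ℝ) : ℂ) * J - b * sbH n ((ω * ρ : ℝ) : ℂ) * j))
        (nhdsWithin 0 (Set.Ioi 0)) (nhds (-h / j)) := by
  set E : ℝ → ℂ := fun ρ => a * (ρ : ℂ) * Gf n ω ρ * J - b * Kf n ω ρ * j with hEdef
  set F : ℝ → ℂ := fun ρ => b * h * Kf n ω ρ - a * (ρ : ℂ) * H * Gf n ω ρ with hFdef
  have hEc : Continuous E :=
    (((continuous_const.mul Complex.continuous_ofReal).mul (Gf_cont n ω)).mul
      continuous_const).sub ((continuous_const.mul (Kf_cont n ω)).mul continuous_const)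
  have hFc : Continuous F :=
    (continuous_const.mul (Kf_cont n ω)).sub
      (((continuous_const.mul Complex.continuous_ofReal).mul continuous_const).mul
        (Gf_cont n ω))
  have hE0 : E 0 = -(b * (Bp n).eval 0 * j) := by
    simp [hEdef, Kf_zero]
  have hE0ne : E 0 ≠ 0 := by
    rw [hE0]
    exact neg_ne_zero.mpr (mul_ne_zero (mul_ne_zero hb (Bp_eval0_ne n hn)) hj)
  have hF0 : F 0 = b * h * (Bp n).eval 0 := by
    simp [hFdef, Kf_zero]
  have hzne : ∀ ρ : ℝ, 0 < ρ → ((ω * ρ : ℝ) : ℂ) ≠ 0 := fun ρ hρ =>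
    Complex.ofReal_ne_zero.mpr (ne_of_gt (mul_pos hω hρ))
  have hden : ∀ ρ : ℝ, 0 < ρ →
      a * (ρ : ℂ) * sbh n ((ω * ρ : ℝ) : ℂ) * J - b * sbH n ((ω * ρ : ℝ) : ℂ) * j
        = ((-1 : ℂ) ^ n / ((ω * ρ : ℝ) : ℂ) ^ (n + 1)) * E ρ := by
    intro ρ hρ
    rw [sbh_eq n _ (hzne ρ hρ), sbH_eq n _ (hzne ρ hρ), hEdef]
    unfold Gf Kf
    have hp : ((ω * ρ : ℝ) : ℂ) ^ (n + 1) ≠ 0 := pow_ne_zero _ (hzne ρ hρ)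
    field_simp
  have hnum : ∀ ρ : ℝ, 0 < ρ →
      b * h * sbH n ((ω * ρ : ℝ) : ℂ) - a * (ρ : ℂ) * H * sbh n ((ω * ρ : ℝ) : ℂ)
        = ((-1 : ℂ) ^ n / ((ω * ρ : ℝ) : ℂ) ^ (n + 1)) * F ρ := by
    intro ρ hρ
    rw [sbh_eq n _ (hzne ρ hρ), sbH_eq n _ (hzne ρ hρ), hFdef]
    unfold Gf Kf
    have hp : ((ω * ρ : ℝ) : ℂ) ^ (n + 1) ≠ 0 := pow_ne_zero _ (hzne ρ hρ)
    field_simp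
  have habs0 : 0 < ‖E 0‖ := norm_pos_iff.mpr hE0ne
  constructor
  · -- big-O part
    have htend : Filter.Tendsto (fun ρ => ‖E ρ‖) (nhds 0)
        (nhds (‖E 0‖)) := (continuous_norm.comp hEc).tendsto 0
    have hev : ∀ᶠ ρ in nhds 0, ‖E 0‖ / 2 < ‖E ρ‖ :=
      htend.eventually (eventually_gt_nhds (by linarith))
    rw [Metric.eventually_nhds_iff] at hev
    obtain ⟨δ, hδpos, hδ⟩ := hev
    refine ⟨‖A‖ * ω ^ (n + 1) / (‖E 0‖ / 2) + 1, by positivity,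
      δ, hδpos, ?_⟩
    intro ρ hρ hρδ
    have hElb : ‖E 0‖ / 2 < ‖E ρ‖ := by
      apply hδ
      rw [Real.dist_eq, sub_zero, abs_of_pos hρ]; exact hρδ
    have hEρpos : 0 < ‖E ρ‖ := lt_trans (by linarith) hElb
    show ‖A / _‖ ≤ _
    rw [hden ρ hρ]
    have habs : ‖A / (((-1 : ℂ) ^ n / ((ω * ρ : ℝ) : ℂ) ^ (n + 1)) * E ρ)‖
        = ‖A‖ * (ω * ρ) ^ (n + 1) / ‖E ρ‖ := by
      have h1 : (0:ℝ) < (ω * ρ) ^ (n + 1) := by positivity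
      rw [norm_div, norm_mul, norm_div, norm_pow, norm_pow, Complex.norm_real,
        Real.norm_of_nonneg (mul_pos hω hρ).le]
      simp only [norm_neg, norm_one, one_pow]
      field_simp
    rw [habs]
    have hrp : ρ ^ ((n : ℝ) + 1) = ρ ^ (n + 1 : ℕ) := by
      rw [show ((n : ℝ) + 1) = ((n + 1 : ℕ) : ℝ) by push_cast; ring, Real.rpow_natCast]
    rw [hrp]
    calc ‖A‖ * (ω * ρ) ^ (n + 1) / ‖E ρ‖
        ≤ ‖A‖ * (ω * ρ) ^ (n + 1) / (‖E 0‖ / 2) := by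
          gcongr
      _ = ‖A‖ * ω ^ (n + 1) / (‖E 0‖ / 2) * ρ ^ (n + 1) := by
          rw [mul_pow]; ring
      _ ≤ (‖A‖ * ω ^ (n + 1) / (‖E 0‖ / 2) + 1) * ρ ^ (n + 1) := by
          apply mul_le_mul_of_nonneg_right (by linarith) (by positivity)
  · -- tendsto part
    have htend2 : Filter.Tendsto (fun ρ : ℝ => F ρ / E ρ) (nhdsWithin 0 (Set.Ioi 0))
        (nhds (F 0 / E 0)) :=
      Filter.Tendsto.div ((hFc.tendsto 0).mono_left nhdsWithin_le_nhds)
        ((hEc.tendsto 0).mono_left nhdsWithin_le_nhds) hE0ne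
    have hval : F 0 / E 0 = -h / j := by
      rw [hF0, hE0]
      field_simp [hj, hb, Bp_eval0_ne n hn]
    rw [← hval]
    apply htend2.congr'
    apply Filter.eventuallyEq_of_mem self_mem_nhdsWithin
    intro ρ hρ
    have hρ' : (0:ℝ) < ρ := hρ
    have hc : ((-1 : ℂ) ^ n / ((ω * ρ : ℝ) : ℂ) ^ (n + 1)) ≠ 0 :=
      div_ne_zero (pow_ne_zero _ (neg_ne_zero.mpr one_ne_zero))
        (pow_ne_zero _ (hzne ρ hρ'))
    show F ρ / E ρ =
      (b * h * sbH n ((ω * ρ : ℝ) : ℂ) - a * (ρ : ℂ) * H * sbh n ((ω * ρ : ℝ) : ℂ)) /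
        (a * (ρ : ℂ) * sbh n ((ω * ρ : ℝ) : ℂ) * J - b * sbH n ((ω * ρ : ℝ) : ℂ) * j)
    rw [hnum ρ hρ', hden ρ hρ', mul_div_mul_left _ _ hc]

end AuxSpherical

/-- Asymptotics of the source transmission ratios:
`t₁′(ρ) = O(ρ^{n+1})`, `t₃′(ρ) = O(ρ^{n+1})`, while `t₂′(ρ)` and `t₄′(ρ)` are bounded
with `t₂′(ρ), t₄′(ρ) → −h_n(kω)/j_n(kω)` as `ρ → 0⁺`. -/
theorem source_transmission_ratios_asymptotics
    (ω ε₀ μ₀ : ℝ) (hω : 0 < ω) (hε : 0 < ε₀) (hμ : 0 < μ₀)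
    (n : ℕ) (hn : 1 ≤ n) (k : ℝ) (hk : k = Real.sqrt (ε₀ * μ₀))
    (hjk : sbj n ((k * ω : ℝ) : ℂ) ≠ 0) :
    IsBigORho (fun ρ => t1' n ω ε₀ μ₀ k ρ) ((n : ℝ) + 1) ∧
    IsBigORho (fun ρ => t3' n ω ε₀ μ₀ k ρ) ((n : ℝ) + 1) ∧
    (∃ C δ : ℝ, 0 < C ∧ 0 < δ ∧ ∀ ρ : ℝ, 0 < ρ → ρ < δ →
      ‖t2' n ω ε₀ μ₀ k ρ‖ ≤ C ∧ ‖t4' n ω ε₀ μ₀ k ρ‖ ≤ C) ∧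
    Filter.Tendsto (fun ρ : ℝ => t2' n ω ε₀ μ₀ k ρ) (nhdsWithin 0 (Set.Ioi 0))
      (nhds (-(sbh n ((k * ω : ℝ) : ℂ)) / sbj n ((k * ω : ℝ) : ℂ))) ∧
    Filter.Tendsto (fun ρ : ℝ => t4' n ω ε₀ μ₀ k ρ) (nhdsWithin 0 (Set.Ioi 0))
      (nhds (-(sbh n ((k * ω : ℝ) : ℂ)) / sbj n ((k * ω : ℝ) : ℂ))) := by
  have hkpos : 0 < k := hk ▸ Real.sqrt_pos.mpr (mul_pos hε hμ)
  have hkC : (k : ℂ) ≠ 0 := Complex.ofReal_ne_zero.mpr (ne_of_gt hkpos)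
  have hiε : invSqrtC ε₀ ≠ 0 := by
    unfold invSqrtC
    exact Complex.ofReal_ne_zero.mpr
      (inv_ne_zero (ne_of_gt (Real.sqrt_pos.mpr hε)))
  have hiμ : invSqrtC μ₀ ≠ 0 := by
    unfold invSqrtC
    exact Complex.ofReal_ne_zero.mpr
      (inv_ne_zero (ne_of_gt (Real.sqrt_pos.mpr hμ)))
  have hb1 : invSqrtC ε₀ * (k : ℂ) ≠ 0 := mul_ne_zero hiε hkC
  have hb2 : invSqrtC μ₀ * (k : ℂ) ≠ 0 := mul_ne_zero hiμ hkC
  have K1 := key_asymp n hn ω hω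
    (sbh n ((k * ω : ℝ) : ℂ) * sbJ n ((k * ω : ℝ) : ℂ)
      - sbH n ((k * ω : ℝ) : ℂ) * sbj n ((k * ω : ℝ) : ℂ))
    (invSqrtC μ₀) (invSqrtC ε₀ * (k : ℂ))
    (sbj n ((k * ω : ℝ) : ℂ)) (sbJ n ((k * ω : ℝ) : ℂ))
    (sbh n ((k * ω : ℝ) : ℂ)) (sbH n ((k * ω : ℝ) : ℂ)) hb1 hjk
  have K2 := key_asymp n hn ω hω
    (sbJ n ((k * ω : ℝ) : ℂ) * sbh n ((k * ω : ℝ) : ℂ)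
      - sbH n ((k * ω : ℝ) : ℂ) * sbj n ((k * ω : ℝ) : ℂ))
    (invSqrtC ε₀) (invSqrtC μ₀ * (k : ℂ))
    (sbj n ((k * ω : ℝ) : ℂ)) (sbJ n ((k * ω : ℝ) : ℂ))
    (sbh n ((k * ω : ℝ) : ℂ)) (sbH n ((k * ω : ℝ) : ℂ)) hb2 hjk
  have ht2 : Filter.Tendsto (fun ρ : ℝ => t2' n ω ε₀ μ₀ k ρ) (nhdsWithin 0 (Set.Ioi 0))
      (nhds (-(sbh n ((k * ω : ℝ) : ℂ)) / sbj n ((k * ω : ℝ) : ℂ))) := K1.2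
  have ht4fun : (fun ρ : ℝ => t4' n ω ε₀ μ₀ k ρ) = (fun ρ : ℝ =>
      (invSqrtC μ₀ * (k : ℂ) * sbh n ((k * ω : ℝ) : ℂ) * sbH n ((ω * ρ : ℝ) : ℂ)
        - invSqrtC ε₀ * (ρ : ℂ) * sbH n ((k * ω : ℝ) : ℂ) * sbh n ((ω * ρ : ℝ) : ℂ)) /
      (invSqrtC ε₀ * (ρ : ℂ) * sbh n ((ω * ρ : ℝ) : ℂ) * sbJ n ((k * ω : ℝ) : ℂ)
        - invSqrtC μ₀ * (k : ℂ) * sbH n ((ω * ρ : ℝ) : ℂ) * sbj n ((k * ω : ℝ) : ℂ))) := by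
    funext ρ
    unfold t4'
    congr 1
    ring
  have ht4 : Filter.Tendsto (fun ρ : ℝ => t4' n ω ε₀ μ₀ k ρ) (nhdsWithin 0 (Set.Ioi 0))
      (nhds (-(sbh n ((k * ω : ℝ) : ℂ)) / sbj n ((k * ω : ℝ) : ℂ))) := by
    rw [ht4fun]; exact K2.2
  refine ⟨K1.1, K2.1, ?_, ht2, ht4⟩
  -- boundedness from the two limits
  set L : ℂ := -(sbh n ((k * ω : ℝ) : ℂ)) / sbj n ((k * ω : ℝ) : ℂ) with hL
  have hB2 : ∀ᶠ ρ in nhdsWithin (0:ℝ) (Set.Ioi 0),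
      ‖t2' n ω ε₀ μ₀ k ρ‖ < ‖L‖ + 1 :=
    ((continuous_norm.tendsto L).comp ht2).eventually
      (eventually_lt_nhds (lt_add_one _))
  have hB4 : ∀ᶠ ρ in nhdsWithin (0:ℝ) (Set.Ioi 0),
      ‖t4' n ω ε₀ μ₀ k ρ‖ < ‖L‖ + 1 :=
    ((continuous_norm.tendsto L).comp ht4).eventually
      (eventually_lt_nhds (lt_add_one _))
  obtain ⟨δ, hδpos, hδ⟩ := (Metric.nhdsWithin_basis_ball.eventually_iff).mp (hB2.and hB4)
  refine ⟨‖L‖ + 1, δ, by positivity, hδpos, fun ρ hρ hρδ => ?_⟩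
  have hmem : ρ ∈ Metric.ball (0:ℝ) δ ∩ Set.Ioi 0 := by
    constructor
    · rw [Metric.mem_ball, Real.dist_eq, sub_zero, abs_of_pos hρ]; exact hρδ
    · exact hρ
  exact ⟨(hδ hmem).1.le, (hδ hmem).2.le⟩
end
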